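/- Let f₀ : Ω ⊆ ℝ⁴ → ℂ(i₁) be a nonvanishing twice continuously differentiable particular solution of the complexified Schrödinger equation (Δ_ℂ − ν(z₁, z₂))f₀ = 0. Then for any ℂ(i₁)-valued twice continuously differentiable function φ on Ω the following equality holds: (Δ_ℂ − ν)φ = 4(∂_ω̄ + (∂_ω f₀ / f₀)C)(∂_ω − (∂_ω f₀ / f₀)C)φ. -/

import Mathlib

noncomputable section

open Complex Filter Topology

/-- The bicomplex numbers `𝕋 = {z₁ + z₂ i₂ : z₁, z₂ ∈ ℂ(i₁)}`, represented by the pair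
of `ℂ(i₁)`-components `(z₁, z₂)`. -/
@[ext] structure Bicomplex : Type where
  z1 : ℂ
  z2 : ℂ

namespace Bicomplex

instance : Zero Bicomplex := ⟨⟨0, 0⟩⟩
instance : One Bicomplex := ⟨⟨1, 0⟩⟩
instance : Add Bicomplex := ⟨fun w v => ⟨w.z1 + v.z1, w.z2 + v.z2⟩⟩
instance : Neg Bicomplex := ⟨fun w => ⟨-w.z1, -w.z2⟩⟩
instance : Mul Bicomplex := ⟨fun w v => ⟨w.z1 * v.z1 - w.z2 * v.z2, w.z1 * v.z2 + w.z2 * v.z1⟩⟩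

@[simp] lemma zero_z1 : (0 : Bicomplex).z1 = 0 := rfl
@[simp] lemma zero_z2 : (0 : Bicomplex).z2 = 0 := rfl
@[simp] lemma one_z1 : (1 : Bicomplex).z1 = 1 := rfl
@[simp] lemma one_z2 : (1 : Bicomplex).z2 = 0 := rfl
@[simp] lemma add_z1 (w v : Bicomplex) : (w + v).z1 = w.z1 + v.z1 := rfl
@[simp] lemma add_z2 (w v : Bicomplex) : (w + v).z2 = w.z2 + v.z2 := rfl
@[simp] lemma neg_z1 (w : Bicomplex) : (-w).z1 = -w.z1 := rfl
@[simp] lemma neg_z2 (w : Bicomplex) : (-w).z2 = -w.z2 := rfl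
@[simp] lemma mul_z1 (w v : Bicomplex) : (w * v).z1 = w.z1 * v.z1 - w.z2 * v.z2 := rfl
@[simp] lemma mul_z2 (w v : Bicomplex) : (w * v).z2 = w.z1 * v.z2 + w.z2 * v.z1 := rfl

/-- The bicomplex numbers form a commutative ring. -/
instance : CommRing Bicomplex where
  nsmul n w := ⟨n • w.z1, n • w.z2⟩
  zsmul n w := ⟨n • w.z1, n • w.z2⟩
  nsmul_zero a := by ext <;> exact zero_smul ℕ _
  nsmul_succ n a := by ext <;> exact succ_nsmul _ n
  zsmul_zero' a := by ext <;> exact zero_smul ℤ _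
  zsmul_succ' n a := by ext <;> (show ((n.succ : ℤ) • _ : ℂ) = (n : ℤ) • _ + _; simp; ring)
  zsmul_neg' n a := by ext <;> (show ((Int.negSucc n) • _ : ℂ) = -(((n.succ : ℤ)) • _); simp [Int.negSucc_eq]; ring)
  add_assoc a b c := by ext <;> simp <;> ring
  zero_add a := by ext <;> simp
  add_zero a := by ext <;> simp
  add_comm a b := by ext <;> simp <;> ring
  neg_add_cancel a := by ext <;> simp
  mul_assoc a b c := by ext <;> simp <;> ring
  one_mul a := by ext <;> simp
  mul_one a := by ext <;> simp
  left_distrib a b c := by ext <;> simp <;> ring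
  right_distrib a b c := by ext <;> simp <;> ring
  zero_mul a := by ext <;> simp
  mul_zero a := by ext <;> simp
  mul_comm a b := by ext <;> simp <;> ring

/-- Inverse: `w⁻¹ = w†₂ / (z₁² + z₂²)` (junk value `0/0` on the null-cone). -/
instance : Inv Bicomplex :=
  ⟨fun w => ⟨w.z1 / (w.z1 ^ 2 + w.z2 ^ 2), -w.z2 / (w.z1 ^ 2 + w.z2 ^ 2)⟩⟩

instance : Div Bicomplex := ⟨fun w v => w * v⁻¹⟩

/-- Embedding of `ℂ(i₁)` into `𝕋`. -/
def ofComplex (c : ℂ) : Bicomplex := ⟨c, 0⟩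

/-- Embedding of `ℝ` into `𝕋`. -/
def ofReal (t : ℝ) : Bicomplex := ⟨(t : ℂ), 0⟩

/-- The imaginary unit `i₁`. -/
def i1 : Bicomplex := ⟨Complex.I, 0⟩

/-- The imaginary unit `i₂`. -/
def i2 : Bicomplex := ⟨0, 1⟩

/-- The hyperbolic unit `j = i₁ i₂`. -/
def jj : Bicomplex := ⟨0, Complex.I⟩

/-- The idempotent `e₁ = (1 + j)/2`. -/
def e1 : Bicomplex := ⟨1 / 2, Complex.I / 2⟩

/-- The idempotent `e₂ = (1 - j)/2`. -/
def e2 : Bicomplex := ⟨1 / 2, -(Complex.I) / 2⟩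

/-- The projection `P₁(z₁ + z₂ i₂) = z₁ - z₂ i₁`. -/
def P1 (w : Bicomplex) : ℂ := w.z1 - w.z2 * Complex.I

/-- The projection `P₂(z₁ + z₂ i₂) = z₁ + z₂ i₁`. -/
def P2 (w : Bicomplex) : ℂ := w.z1 + w.z2 * Complex.I

/-- The conjugation `w†₁ = z̄₁ + z̄₂ i₂`. -/
def dag1 (w : Bicomplex) : Bicomplex := ⟨(starRingEnd ℂ) w.z1, (starRingEnd ℂ) w.z2⟩

/-- The conjugation `w†₂ = z₁ - z₂ i₂`. -/
def dag2 (w : Bicomplex) : Bicomplex := ⟨w.z1, -w.z2⟩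

/-- The conjugation `w†₃ = z̄₁ - z̄₂ i₂`. -/
def dag3 (w : Bicomplex) : Bicomplex := ⟨(starRingEnd ℂ) w.z1, -((starRingEnd ℂ) w.z2)⟩

/-- `𝕋` as `ℂ × ℂ`. -/
def toProd (w : Bicomplex) : ℂ × ℂ := (w.z1, w.z2)

/-- `ℂ × ℂ` as `𝕋`. -/
def ofProd (p : ℂ × ℂ) : Bicomplex := ⟨p.1, p.2⟩

instance : TopologicalSpace Bicomplex := TopologicalSpace.induced toProd inferInstance

/-- The set of points `w` such that `w - w₀` is invertible (i.e. not a zero divisor). -/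
def invertibleDiff (w₀ : Bicomplex) : Set Bicomplex :=
  {w | (w - w₀).z1 ^ 2 + (w - w₀).z2 ^ 2 ≠ 0}

/-- `f` is `𝕋`-differentiable at `w₀` with derivative `d`:
`(f w - f w₀)/(w - w₀) → d` as `w → w₀` with `w - w₀` invertible. -/
def HasTDerivAt (f : Bicomplex → Bicomplex) (d w₀ : Bicomplex) : Prop :=
  Tendsto (fun w => (f w - f w₀) / (w - w₀)) (𝓝[invertibleDiff w₀] w₀) (𝓝 d)

/-- `f` is `𝕋`-holomorphic on `U` if it is `𝕋`-differentiable at each point of `U`. -/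
def THolomorphicOn (f : Bicomplex → Bicomplex) (U : Set Bicomplex) : Prop :=
  ∀ w ∈ U, ∃ d, HasTDerivAt f d w

/-- `f` viewed as a map `ℂ² → ℂ²`. -/
def fProd (f : Bicomplex → Bicomplex) : ℂ × ℂ → ℂ × ℂ := fun p => toProd (f (ofProd p))

/-- `f : 𝕋 → 𝕋` is `n` times continuously (real-)differentiable on `U`. -/
def TContDiffOn (n : ℕ∞) (f : Bicomplex → Bicomplex) (U : Set Bicomplex) : Prop :=
  ContDiffOn ℝ n (fProd f) (toProd '' U)

/-- `g : 𝕋 → ℂ` is `n` times continuously (real-)differentiable on `U`. -/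
def CContDiffOn (n : ℕ∞) (g : Bicomplex → ℂ) (U : Set Bicomplex) : Prop :=
  ContDiffOn ℝ n (fun p => g (ofProd p)) (toProd '' U)

/-- Real partial derivative of `g : 𝕋 → ℂ` at `w` in direction `e`. -/
def pd (e : Bicomplex) (g : Bicomplex → ℂ) (w : Bicomplex) : ℂ :=
  deriv (fun t : ℝ => g (w + ofReal t * e)) 0

/-- Existence of the real partial derivative of `g : 𝕋 → ℂ` at `w` in direction `e`. -/
def pdExists (e : Bicomplex) (g : Bicomplex → ℂ) (w : Bicomplex) : Prop :=
  DifferentiableAt ℝ (fun t : ℝ => g (w + ofReal t * e)) 0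

/-- The scalar (`ℂ(i₁)`-) component `f₁` of `f = f₁ + f₂ i₂`. -/
def s1 (f : Bicomplex → Bicomplex) : Bicomplex → ℂ := fun w => (f w).z1

/-- The vectorial (`ℂ(i₁)`-) component `f₂` of `f = f₁ + f₂ i₂`. -/
def s2 (f : Bicomplex → Bicomplex) : Bicomplex → ℂ := fun w => (f w).z2

/-- Real partial derivative of `f : 𝕋 → 𝕋` in direction `e`. -/
def pdT (e : Bicomplex) (f : Bicomplex → Bicomplex) : Bicomplex → Bicomplex :=
  fun w => ⟨pd e (s1 f) w, pd e (s2 f) w⟩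

/-- Existence of the real partial derivative of `f : 𝕋 → 𝕋` in direction `e`. -/
def pdTExists (e : Bicomplex) (f : Bicomplex → Bicomplex) (w : Bicomplex) : Prop :=
  pdExists e (s1 f) w ∧ pdExists e (s2 f) w

/-- `∂_{z₁} g = ½(∂ₓ g - i₁ ∂_y g)` for `g : 𝕋 → ℂ`. -/
def dz1 (g : Bicomplex → ℂ) : Bicomplex → ℂ :=
  fun w => (pd 1 g w - Complex.I * pd i1 g w) / 2

/-- `∂_{z̄₁} g = ½(∂ₓ g + i₁ ∂_y g)` for `g : 𝕋 → ℂ`. -/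
def dz1bar (g : Bicomplex → ℂ) : Bicomplex → ℂ :=
  fun w => (pd 1 g w + Complex.I * pd i1 g w) / 2

/-- `∂_{z₂} g = ½(∂_p g - i₁ ∂_q g)` for `g : 𝕋 → ℂ`. -/
def dz2 (g : Bicomplex → ℂ) : Bicomplex → ℂ :=
  fun w => (pd i2 g w - Complex.I * pd jj g w) / 2

/-- `∂_{z̄₂} g = ½(∂_p g + i₁ ∂_q g)` for `g : 𝕋 → ℂ`. -/
def dz2bar (g : Bicomplex → ℂ) : Bicomplex → ℂ :=
  fun w => (pd i2 g w + Complex.I * pd jj g w) / 2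

/-- `∂_{z₁}` applied componentwise to `f : 𝕋 → 𝕋`. -/
def dZ1 (f : Bicomplex → Bicomplex) : Bicomplex → Bicomplex :=
  fun w => ⟨dz1 (s1 f) w, dz1 (s2 f) w⟩

/-- `∂_{z₂}` applied componentwise to `f : 𝕋 → 𝕋`. -/
def dZ2 (f : Bicomplex → Bicomplex) : Bicomplex → Bicomplex :=
  fun w => ⟨dz2 (s1 f) w, dz2 (s2 f) w⟩

/-- `∂_{z̄₁}` applied componentwise to `f : 𝕋 → 𝕋`. -/
def dZ1bar (f : Bicomplex → Bicomplex) : Bicomplex → Bicomplex :=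
  fun w => ⟨dz1bar (s1 f) w, dz1bar (s2 f) w⟩

/-- `∂_{z̄₂}` applied componentwise to `f : 𝕋 → 𝕋`. -/
def dZ2bar (f : Bicomplex → Bicomplex) : Bicomplex → Bicomplex :=
  fun w => ⟨dz2bar (s1 f) w, dz2bar (s2 f) w⟩

/-- `∂_ω = ½(∂_{z₁} - i₂ ∂_{z₂})`. -/
def dOm (f : Bicomplex → Bicomplex) : Bicomplex → Bicomplex :=
  fun w => ofComplex (1 / 2) * (dZ1 f w - i2 * dZ2 f w)

/-- `∂_{ω†₂} = ∂_ω̄ = ½(∂_{z₁} + i₂ ∂_{z₂})`. -/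
def dOmBar (f : Bicomplex → Bicomplex) : Bicomplex → Bicomplex :=
  fun w => ofComplex (1 / 2) * (dZ1 f w + i2 * dZ2 f w)

/-- `∂_{ω†₁} = ½(∂_{z̄₁} - i₂ ∂_{z̄₂})`. -/
def dOmDag1 (f : Bicomplex → Bicomplex) : Bicomplex → Bicomplex :=
  fun w => ofComplex (1 / 2) * (dZ1bar f w - i2 * dZ2bar f w)

/-- `∂_{ω†₃} = ½(∂_{z̄₁} + i₂ ∂_{z̄₂})`. -/
def dOmDag3 (f : Bicomplex → Bicomplex) : Bicomplex → Bicomplex :=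
  fun w => ofComplex (1 / 2) * (dZ1bar f w + i2 * dZ2bar f w)

/-- The complexified Laplacian `Δ_ℂ = ∂²_{z₁} + ∂²_{z₂}` acting on `ℂ(i₁)`-valued functions. -/
def lapC (g : Bicomplex → ℂ) : Bicomplex → ℂ :=
  fun w => dz1 (dz1 g) w + dz2 (dz2 g) w

/-- The vector part in the `i₂`-representation `w = ζ₁ + ζ₂ i₁` with `ζ₁, ζ₂ ∈ ℂ(i₂)`:
for `w = x₁ + x₂i₁ + x₃i₂ + x₄j`, `Vec(w) = x₂ + x₄ i₂`, encoded as the complex number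
`x₂ + x₄ i`. -/
def vec2 (w : Bicomplex) : ℂ := ⟨w.z1.im, w.z2.im⟩

/-- Embedding of `ℂ(i₂)` into `𝕋`: the complex number `a + b i` represents `a + b i₂`. -/
def ofC2 (c : ℂ) : Bicomplex := ⟨(c.re : ℂ), (c.im : ℂ)⟩

/-- Multiplication of hyperbolic numbers `ℂ(j) = {x + yj}`, encoded as pairs in `ℝ × ℝ`. -/
def hmul (a b : ℝ × ℝ) : ℝ × ℝ := (a.1 * b.1 + a.2 * b.2, a.1 * b.2 + a.2 * b.1)

/-- Division of hyperbolic numbers (junk value when the denominator is a zero divisor). -/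
def hdiv (a b : ℝ × ℝ) : ℝ × ℝ :=
  hmul a (b.1 / (b.1 ^ 2 - b.2 ^ 2), -b.2 / (b.1 ^ 2 - b.2 ^ 2))

/-- Embedding of the hyperbolic numbers `ℂ(j)` into `𝕋`: `(x, y) ↦ x + y j`. -/
def ofHyp (a : ℝ × ℝ) : Bicomplex := ⟨(a.1 : ℂ), (a.2 : ℂ) * Complex.I⟩

/-- The vector part in the `j`-representation `w = ζ₁ + ζ₂ i₁` with `ζ₁, ζ₂ ∈ ℂ(j)`:
for `w = x₁ + x₂i₁ + x₃i₂ + x₄j`, `Vec(w) = x₂ - x₃ j`, encoded as the pair `(x₂, -x₃)`. -/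
def vec3 (w : Bicomplex) : ℝ × ℝ := (w.z1.im, -w.z2.re)

/-- The `𝕋`-cartesian set `X₁ ×ₑ X₂ = {w : P₁ w ∈ X₁ ∧ P₂ w ∈ X₂}`. -/
def eProd (X₁ X₂ : Set ℂ) : Set Bicomplex := {w | P1 w ∈ X₁ ∧ P2 w ∈ X₂}

/-- `(F, G)` is an `i₁`-generating pair on `D`. -/
def GenPair1 (F G : Bicomplex → Bicomplex) (D : Set Bicomplex) : Prop :=
  TContDiffOn 2 F D ∧ TContDiffOn 2 G D ∧ ∀ w ∈ D, (dag2 (F w) * G w).z2 ≠ 0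

/-- `(F, G)` is an `i₂`-generating pair on `D`. -/
def GenPair2 (F G : Bicomplex → Bicomplex) (D : Set Bicomplex) : Prop :=
  TContDiffOn 2 F D ∧ TContDiffOn 2 G D ∧ ∀ w ∈ D, vec2 (dag1 (F w) * G w) ≠ 0

/-- `(F, G)` is a `j`-generating pair on `D`. -/
def GenPairJ (F G : Bicomplex → Bicomplex) (D : Set Bicomplex) : Prop :=
  TContDiffOn 2 F D ∧ TContDiffOn 2 G D ∧ ∀ w ∈ D, vec3 (dag3 (F w) * G w) ≠ 0

/-- The unique `λ₀ ∈ ℂ(i₁)` with `w(ω₀) = λ₀ F(ω₀) + μ₀ G(ω₀)`. -/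
def lam1 (F G wf : Bicomplex → Bicomplex) (ω₀ : Bicomplex) : ℂ :=
  (dag2 (wf ω₀) * G ω₀).z2 / (dag2 (F ω₀) * G ω₀).z2

/-- The unique `μ₀ ∈ ℂ(i₁)` with `w(ω₀) = λ₀ F(ω₀) + μ₀ G(ω₀)`. -/
def mu1 (F G wf : Bicomplex → Bicomplex) (ω₀ : Bicomplex) : ℂ :=
  -((dag2 (wf ω₀) * F ω₀).z2 / (dag2 (F ω₀) * G ω₀).z2)

/-- `w` has `(F,G)_{i₁}`-derivative `d` at `ω₀`. -/
def HasFGDeriv1 (F G wf : Bicomplex → Bicomplex) (d ω₀ : Bicomplex) : Prop :=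
  Tendsto
    (fun ω => (wf ω - ofComplex (lam1 F G wf ω₀) * F ω - ofComplex (mu1 F G wf ω₀) * G ω)
        / (ω - ω₀))
    (𝓝[invertibleDiff ω₀] ω₀) (𝓝 d)

/-- The unique `λ₀ ∈ ℂ(j)` with `w(ω₀) = λ₀ F(ω₀) + μ₀ G(ω₀)`. -/
def lamJ (F G wf : Bicomplex → Bicomplex) (ω₀ : Bicomplex) : ℝ × ℝ :=
  hdiv (vec3 (dag3 (wf ω₀) * G ω₀)) (vec3 (dag3 (F ω₀) * G ω₀))

/-- The unique `μ₀ ∈ ℂ(j)` with `w(ω₀) = λ₀ F(ω₀) + μ₀ G(ω₀)`. -/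
def muJ (F G wf : Bicomplex → Bicomplex) (ω₀ : Bicomplex) : ℝ × ℝ :=
  -(hdiv (vec3 (dag3 (wf ω₀) * F ω₀)) (vec3 (dag3 (F ω₀) * G ω₀)))

/-- `w` has `(F,G)_j`-derivative `d` at `ω₀`. -/
def HasFGDerivJ (F G wf : Bicomplex → Bicomplex) (d ω₀ : Bicomplex) : Prop :=
  Tendsto
    (fun ω => (wf ω - ofHyp (lamJ F G wf ω₀) * F ω - ofHyp (muJ F G wf ω₀) * G ω) / (ω - ω₀))
    (𝓝[invertibleDiff ω₀] ω₀) (𝓝 d)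

/-- `w` is `(F,G)_j`-pseudoanalytic on `D`. -/
def PseudoanalyticJ (F G wf : Bicomplex → Bicomplex) (D : Set Bicomplex) : Prop :=
  ∀ ω ∈ D, ∃ d, HasFGDerivJ F G wf d ω

/-- `w` has continuous partial derivatives in a neighborhood of `ω₀`. -/
def HasContPartialsNear (f : Bicomplex → Bicomplex) (w₀ : Bicomplex) : Prop :=
  ∃ V ∈ 𝓝 w₀, ∀ e ∈ ({1, i1, i2, jj} : Set Bicomplex),
    (∀ w ∈ V, pdTExists e f w) ∧ ContinuousOn (pdT e f) V

/-! Characteristic coefficients with respect to the `†₂` conjugation (`i₁` case). -/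

def denom2 (F G : Bicomplex → Bicomplex) (w : Bicomplex) : Bicomplex :=
  F w * dag2 (G w) - dag2 (F w) * G w

def aCoef2₁ (F G : Bicomplex → Bicomplex) (w : Bicomplex) : Bicomplex :=
  -((dag1 (F w) * dOmDag1 G w - dOmDag1 F w * dag1 (G w)) / denom2 F G w)

def bCoef2₁ (F G : Bicomplex → Bicomplex) (w : Bicomplex) : Bicomplex :=
  (F w * dOmDag1 G w - dOmDag1 F w * G w) / denom2 F G w

def aCoef2₂ (F G : Bicomplex → Bicomplex) (w : Bicomplex) : Bicomplex :=
  -((dag2 (F w) * dOmBar G w - dOmBar F w * dag2 (G w)) / denom2 F G w)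

def bCoef2₂ (F G : Bicomplex → Bicomplex) (w : Bicomplex) : Bicomplex :=
  (F w * dOmBar G w - dOmBar F w * G w) / denom2 F G w

def aCoef2₃ (F G : Bicomplex → Bicomplex) (w : Bicomplex) : Bicomplex :=
  -((dag3 (F w) * dOmDag3 G w - dOmDag3 F w * dag3 (G w)) / denom2 F G w)

def bCoef2₃ (F G : Bicomplex → Bicomplex) (w : Bicomplex) : Bicomplex :=
  (F w * dOmDag3 G w - dOmDag3 F w * G w) / denom2 F G w

def Acoef2 (F G : Bicomplex → Bicomplex) (w : Bicomplex) : Bicomplex :=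
  -((dag2 (F w) * dOm G w - dOm F w * dag2 (G w)) / denom2 F G w)

def Bcoef2 (F G : Bicomplex → Bicomplex) (w : Bicomplex) : Bicomplex :=
  (F w * dOm G w - dOm F w * G w) / denom2 F G w

/-! Characteristic coefficients with respect to the `†₃` conjugation (`j` case). -/

def denom3 (F G : Bicomplex → Bicomplex) (w : Bicomplex) : Bicomplex :=
  F w * dag3 (G w) - dag3 (F w) * G w

def aCoef3₁ (F G : Bicomplex → Bicomplex) (w : Bicomplex) : Bicomplex :=
  -((dag1 (F w) * dOmDag1 G w - dOmDag1 F w * dag1 (G w)) / denom3 F G w)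

def bCoef3₁ (F G : Bicomplex → Bicomplex) (w : Bicomplex) : Bicomplex :=
  (F w * dOmDag1 G w - dOmDag1 F w * G w) / denom3 F G w

def aCoef3₂ (F G : Bicomplex → Bicomplex) (w : Bicomplex) : Bicomplex :=
  -((dag2 (F w) * dOmBar G w - dOmBar F w * dag2 (G w)) / denom3 F G w)

def bCoef3₂ (F G : Bicomplex → Bicomplex) (w : Bicomplex) : Bicomplex :=
  (F w * dOmBar G w - dOmBar F w * G w) / denom3 F G w

def aCoef3₃ (F G : Bicomplex → Bicomplex) (w : Bicomplex) : Bicomplex :=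
  -((dag3 (F w) * dOmDag3 G w - dOmDag3 F w * dag3 (G w)) / denom3 F G w)

def bCoef3₃ (F G : Bicomplex → Bicomplex) (w : Bicomplex) : Bicomplex :=
  (F w * dOmDag3 G w - dOmDag3 F w * G w) / denom3 F G w

def Acoef3 (F G : Bicomplex → Bicomplex) (w : Bicomplex) : Bicomplex :=
  -((dag3 (F w) * dOm G w - dOm F w * dag3 (G w)) / denom3 F G w)

def Bcoef3 (F G : Bicomplex → Bicomplex) (w : Bicomplex) : Bicomplex :=
  (F w * dOm G w - dOm F w * G w) / denom3 F G w

/-! Classical (Bers) pseudoanalytic function theory in `ℂ(i₁)`. -/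

/-- A complex (in `i₁`) generating pair on `D ⊆ ℂ(i₁)`. -/
def ComplexGenPair (Fe Ge : ℂ → ℂ) (D : Set ℂ) : Prop :=
  ContDiffOn ℝ 2 Fe D ∧ ContDiffOn ℝ 2 Ge D ∧
    ∀ z ∈ D, ((starRingEnd ℂ) (Fe z) * Ge z).im ≠ 0

/-- The unique real `λ₀` with `w(z₀) = λ₀ F(z₀) + μ₀ G(z₀)`. -/
def lamBers (Fe Ge we : ℂ → ℂ) (z₀ : ℂ) : ℝ :=
  ((starRingEnd ℂ) (we z₀) * Ge z₀).im / ((starRingEnd ℂ) (Fe z₀) * Ge z₀).im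

/-- The unique real `μ₀` with `w(z₀) = λ₀ F(z₀) + μ₀ G(z₀)`. -/
def muBers (Fe Ge we : ℂ → ℂ) (z₀ : ℂ) : ℝ :=
  -(((starRingEnd ℂ) (we z₀) * Fe z₀).im / ((starRingEnd ℂ) (Fe z₀) * Ge z₀).im)

/-- `w_e` has Bers `(F_e,G_e)`-derivative `d` at `z₀`. -/
def HasBersDerivAt (Fe Ge we : ℂ → ℂ) (d z₀ : ℂ) : Prop :=
  Tendsto
    (fun z => (we z - (lamBers Fe Ge we z₀ : ℂ) * Fe z - (muBers Fe Ge we z₀ : ℂ) * Ge z)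
        / (z - z₀))
    (𝓝[≠] z₀) (𝓝 d)

/-- `w_e` is `(F_e,G_e)`-pseudoanalytic (in the sense of Bers) on `D`. -/
def BersPseudoanalyticOn (Fe Ge we : ℂ → ℂ) (D : Set ℂ) : Prop :=
  ∀ z ∈ D, ∃ d, HasBersDerivAt Fe Ge we d z

/-- `∂_z̄ = ½(∂ₓ + i ∂_y)` for functions `ℂ(i₁) → ℂ(i₁)`. -/
def dzbarC (g : ℂ → ℂ) (z : ℂ) : ℂ :=
  (deriv (fun t : ℝ => g (z + t)) 0 + Complex.I * deriv (fun t : ℝ => g (z + t * Complex.I)) 0) / 2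

/-- The Bers characteristic coefficient `a_{(F_e,G_e)}`. -/
def aBers (Fe Ge : ℂ → ℂ) (z : ℂ) : ℂ :=
  -(((starRingEnd ℂ) (Fe z) * dzbarC Ge z - dzbarC Fe z * (starRingEnd ℂ) (Ge z)) /
    (Fe z * (starRingEnd ℂ) (Ge z) - (starRingEnd ℂ) (Fe z) * Ge z))

/-- The Bers characteristic coefficient `b_{(F_e,G_e)}`. -/
def bBers (Fe Ge : ℂ → ℂ) (z : ℂ) : ℂ :=
  (Fe z * dzbarC Ge z - dzbarC Fe z * Ge z) /
    (Fe z * (starRingEnd ℂ) (Ge z) - (starRingEnd ℂ) (Fe z) * Ge z)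

/-- `(F, G)` is the `i₂e`-generating pair associated to complex generating pairs
`(F_{e1}, G_{e1})` on `D₁` and `(F_{e2}, G_{e2})` on `D₂`. -/
def I2eGenPair (Fe1 Ge1 Fe2 Ge2 : ℂ → ℂ) (D₁ D₂ : Set ℂ)
    (F G : Bicomplex → Bicomplex) : Prop :=
  ComplexGenPair Fe1 Ge1 D₁ ∧ ComplexGenPair Fe2 Ge2 D₂ ∧
  (∀ w, F w = ofComplex (Fe1 (P1 w)) * e1 + ofComplex (Fe2 (P2 w)) * e2) ∧
  (∀ w, G w = ofComplex (Ge1 (P1 w)) * e1 + ofComplex (Ge2 (P2 w)) * e2)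

end Bicomplex

open Bicomplex

namespace SchroedingerAux
open Bicomplex

/-- Directional derivative of `g : ℂ × ℂ → ℂ` at `p` in direction `v`. -/
def dd (g : ℂ × ℂ → ℂ) (u p : ℂ × ℂ) : ℂ := fderiv ℝ g p u

lemma dd_congr {g h : ℂ × ℂ → ℂ} {p : ℂ × ℂ} (H : g =ᶠ[nhds p] h) (u : ℂ × ℂ) :
    dd g u p = dd h u p := by unfold dd; rw [H.fderiv_eq]

lemma dd_const (c : ℂ) (u p : ℂ × ℂ) : dd (fun _ => c) u p = 0 := by simp [dd]

lemma dd_add {g h : ℂ × ℂ → ℂ} {p : ℂ × ℂ} (hg : DifferentiableAt ℝ g p)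
    (hh : DifferentiableAt ℝ h p) (u : ℂ × ℂ) :
    dd (fun q => g q + h q) u p = dd g u p + dd h u p := by
  simp [dd, fderiv_fun_add hg hh]

lemma dd_neg {g : ℂ × ℂ → ℂ} {p : ℂ × ℂ} (u : ℂ × ℂ) :
    dd (fun q => -(g q)) u p = -(dd g u p) := by
  simp [dd, fderiv_neg]

lemma dd_sub {g h : ℂ × ℂ → ℂ} {p : ℂ × ℂ} (hg : DifferentiableAt ℝ g p)
    (hh : DifferentiableAt ℝ h p) (u : ℂ × ℂ) :
    dd (fun q => g q - h q) u p = dd g u p - dd h u p := by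
  simp [dd, fderiv_fun_sub hg hh]

lemma dd_mul {g h : ℂ × ℂ → ℂ} {p : ℂ × ℂ} (hg : DifferentiableAt ℝ g p)
    (hh : DifferentiableAt ℝ h p) (u : ℂ × ℂ) :
    dd (fun q => g q * h q) u p = g p * dd h u p + h p * dd g u p := by
  simp [dd, fderiv_fun_mul hg hh, smul_eq_mul]

lemma dd_const_mul {g : ℂ × ℂ → ℂ} {p : ℂ × ℂ} (hg : DifferentiableAt ℝ g p) (c : ℂ)
    (u : ℂ × ℂ) : dd (fun q => c * g q) u p = c * dd g u p := by
  simp [dd, fderiv_const_mul hg c, smul_eq_mul]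

lemma dd_div_const {g : ℂ × ℂ → ℂ} {p : ℂ × ℂ} (hg : DifferentiableAt ℝ g p) (c : ℂ)
    (u : ℂ × ℂ) : dd (fun q => g q / c) u p = dd g u p / c := by
  have h : (fun q => g q / c) = fun q => c⁻¹ * g q := by funext q; rw [div_eq_mul_inv, mul_comm]
  rw [h, dd_const_mul hg c⁻¹ u, div_eq_mul_inv, mul_comm]

lemma dd_inv {g : ℂ × ℂ → ℂ} {p : ℂ × ℂ} (hg : DifferentiableAt ℝ g p)
    (h0 : g p ≠ 0) (u : ℂ × ℂ) :
    dd (fun q => (g q)⁻¹) u p = -(dd g u p) / (g p) ^ 2 := by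
  have h : (fun q => (g q)⁻¹) = Inv.inv ∘ g := rfl
  unfold dd
  rw [h, fderiv_comp p (differentiableAt_inv h0) hg, fderiv_inv' h0]
  simp only [ContinuousLinearMap.coe_comp', Function.comp_apply, ContinuousLinearMap.neg_apply,
    ContinuousLinearMap.mulLeftRight_apply]
  field_simp

/-- second-derivative symmetry -/
lemma dd_dd_symm {g : ℂ × ℂ → ℂ} {p : ℂ × ℂ} (hg : ContDiffAt ℝ 2 g p) (u v : ℂ × ℂ) :
    dd (fun q => dd g u q) v p = dd (fun q => dd g v q) u p := by
  have hd : DifferentiableAt ℝ (fderiv ℝ g) p :=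
    (hg.fderiv_right (m := 1) (by norm_num)).differentiableAt (by norm_num)
  have key : ∀ a b : ℂ × ℂ, dd (fun q => dd g a q) b p = fderiv ℝ (fderiv ℝ g) p b a := by
    intro a b
    unfold dd
    rw [fderiv_clm_apply hd (differentiableAt_const a)]
    simp
  rw [key, key]
  exact hg.isSymmSndFDerivAt (by norm_num) v u

lemma dd_diff {g : ℂ × ℂ → ℂ} {p : ℂ × ℂ} (hg : ContDiffAt ℝ 2 g p) (u : ℂ × ℂ) :
    DifferentiableAt ℝ (fun q => dd g u q) p := by
  have hd : DifferentiableAt ℝ (fderiv ℝ g) p :=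
    (hg.fderiv_right (m := 1) (by norm_num)).differentiableAt (by norm_num)
  exact hd.clm_apply (differentiableAt_const u)

lemma tendsto_curve (w e : Bicomplex) :
    Filter.Tendsto (fun t : ℝ => w + Bicomplex.ofReal t * e) (nhds 0) (nhds w) := by
  have hc : Continuous (fun t : ℝ => w + Bicomplex.ofReal t * e) := by
    rw [continuous_induced_rng]
    have : (toProd ∘ fun t : ℝ => w + Bicomplex.ofReal t * e) =
        fun t : ℝ => ((w.z1 + t * e.z1 : ℂ), (w.z2 + t * e.z2 : ℂ)) := by
      funext t
      simp [toProd, Bicomplex.ofReal, Prod.ext_iff]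
    rw [this]
    fun_prop
  have h0 : w + Bicomplex.ofReal 0 * e = w := by ext <;> simp [Bicomplex.ofReal]
  simpa [h0] using hc.tendsto 0

lemma pd_congr {g h : Bicomplex → ℂ} {w : Bicomplex} (H : ∀ᶠ v in nhds w, g v = h v)
    (e : Bicomplex) : pd e g w = pd e h w := by
  unfold pd
  apply Filter.EventuallyEq.deriv_eq
  exact (tendsto_curve w e).eventually H

lemma pd_eq_dd {g : Bicomplex → ℂ} {w : Bicomplex}
    (h : DifferentiableAt ℝ (fun q : ℂ × ℂ => g ⟨q.1, q.2⟩) (w.z1, w.z2)) (e : Bicomplex) :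
    pd e g w = dd (fun q : ℂ × ℂ => g ⟨q.1, q.2⟩) (e.z1, e.z2) (w.z1, w.z2) := by
  set c : ℝ → ℂ × ℂ := fun t => (w.z1 + t • e.z1, w.z2 + t • e.z2) with hcdef
  have hc0 : c 0 = (w.z1, w.z2) := by simp [hcdef]
  have hcd : HasDerivAt c (e.z1, e.z2) 0 := by
    apply HasDerivAt.prodMk
    · simpa using ((hasDerivAt_id (0:ℝ)).smul_const e.z1).const_add w.z1
    · simpa using ((hasDerivAt_id (0:ℝ)).smul_const e.z2).const_add w.z2
  have heq : (fun t : ℝ => g (w + Bicomplex.ofReal t * e)) =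
      fun t : ℝ => (fun q : ℂ × ℂ => g ⟨q.1, q.2⟩) (c t) := by
    funext t
    congr 1
    ext <;> simp [hcdef, Bicomplex.ofReal, Complex.real_smul]
  have h' : HasFDerivAt (fun q : ℂ × ℂ => g ⟨q.1, q.2⟩)
      (fderiv ℝ (fun q : ℂ × ℂ => g ⟨q.1, q.2⟩) (w.z1, w.z2)) (c 0) :=
    hc0.symm ▸ h.hasFDerivAt
  rw [pd, heq]
  exact (h'.comp_hasDerivAt 0 hcd).deriv

lemma dz1_eq {g : Bicomplex → ℂ} {w : Bicomplex}
    (h : DifferentiableAt ℝ (fun q : ℂ × ℂ => g ⟨q.1, q.2⟩) (w.z1, w.z2)) :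
    dz1 g w = (dd (fun q : ℂ × ℂ => g ⟨q.1, q.2⟩) (1, 0) (w.z1, w.z2)
      - Complex.I * dd (fun q : ℂ × ℂ => g ⟨q.1, q.2⟩) (Complex.I, 0) (w.z1, w.z2)) / 2 := by
  rw [dz1, pd_eq_dd h 1, pd_eq_dd h i1]
  rfl

lemma dz2_eq {g : Bicomplex → ℂ} {w : Bicomplex}
    (h : DifferentiableAt ℝ (fun q : ℂ × ℂ => g ⟨q.1, q.2⟩) (w.z1, w.z2)) :
    dz2 g w = (dd (fun q : ℂ × ℂ => g ⟨q.1, q.2⟩) (0, 1) (w.z1, w.z2)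
      - Complex.I * dd (fun q : ℂ × ℂ => g ⟨q.1, q.2⟩) (0, Complex.I) (w.z1, w.z2)) / 2 := by
  rw [dz2, pd_eq_dd h i2, pd_eq_dd h jj]
  rfl

lemma pd_neg (g : Bicomplex → ℂ) (e w : Bicomplex) :
    pd e (fun v => -(g v)) w = -(pd e g w) := by
  simp only [pd]
  exact deriv.neg

lemma dz1_neg (g : Bicomplex → ℂ) (w : Bicomplex) :
    dz1 (fun v => -(g v)) w = -(dz1 g w) := by
  simp only [dz1, pd_neg]; ring

lemma dz2_neg (g : Bicomplex → ℂ) (w : Bicomplex) :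
    dz2 (fun v => -(g v)) w = -(dz2 g w) := by
  simp only [dz2, pd_neg]; ring

@[simp] lemma pd_zero (e w : Bicomplex) : pd e (fun _ => (0:ℂ)) w = 0 := by
  simp [pd]

@[simp] lemma dz1_zero (w : Bicomplex) : dz1 (fun _ => (0:ℂ)) w = 0 := by
  simp [dz1]

@[simp] lemma dz2_zero (w : Bicomplex) : dz2 (fun _ => (0:ℂ)) w = 0 := by
  simp [dz2]

lemma continuous_ofProd : Continuous ofProd :=
  continuous_induced_rng.2 (by exact continuous_id)

lemma dz1_congr {g h : Bicomplex → ℂ} {w : Bicomplex} (H : ∀ᶠ v in nhds w, g v = h v) :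
    dz1 g w = dz1 h w := by
  simp only [dz1, pd_congr H]

lemma dz2_congr {g h : Bicomplex → ℂ} {w : Bicomplex} (H : ∀ᶠ v in nhds w, g v = h v) :
    dz2 g w = dz2 h w := by
  simp only [dz2, pd_congr H]

lemma diff_div_const {g : ℂ × ℂ → ℂ} {p : ℂ × ℂ} (hg : DifferentiableAt ℝ g p) (c : ℂ) :
    DifferentiableAt ℝ (fun q => g q / c) p := by
  simpa [div_eq_mul_inv] using hg.mul_const c⁻¹

/-- `∂_{z₁}`-type operator on the `ℂ²` side. -/
def DOP (g : ℂ × ℂ → ℂ) (a b : ℂ × ℂ) : ℂ × ℂ → ℂ :=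
  fun q => (dd g a q - Complex.I * dd g b q) / 2

/-- the scalar template whose `dd`s we must expand -/
def TPL (F P : ℂ × ℂ → ℂ) (a b : ℂ × ℂ) : ℂ × ℂ → ℂ :=
  fun q => DOP P a b q / 2 - DOP F a b q / 2 * (F q)⁻¹ * P q

lemma dd_DOP {g : ℂ × ℂ → ℂ} {p : ℂ × ℂ} (hg : ContDiffAt ℝ 2 g p) (a b u : ℂ × ℂ) :
    dd (DOP g a b) u p
      = (dd (fun q => dd g a q) u p - Complex.I * dd (fun q => dd g b q) u p) / 2 := by
  unfold DOP
  rw [dd_div_const (g := fun q => dd g a q - Complex.I * dd g b q) ((dd_diff hg a).sub ((dd_diff hg b).const_mul Complex.I)) (2:ℂ),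
    dd_sub (dd_diff hg a) ((dd_diff hg b).const_mul Complex.I), dd_const_mul (dd_diff hg b) Complex.I]

lemma dd_TPL {F P : ℂ × ℂ → ℂ} {p : ℂ × ℂ} (hF : ContDiffAt ℝ 2 F p)
    (hP : ContDiffAt ℝ 2 P p) (h0 : F p ≠ 0) (a b u : ℂ × ℂ) :
    dd (TPL F P a b) u p
      = (dd (fun q => dd P a q) u p - Complex.I * dd (fun q => dd P b q) u p) / 4
        - ((dd (fun q => dd F a q) u p - Complex.I * dd (fun q => dd F b q) u p) / 4 * (F p)⁻¹
            + (dd F a p - Complex.I * dd F b p) / 4 * (-(dd F u p) / (F p) ^ 2)) * P p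
        - (dd F a p - Complex.I * dd F b p) / 4 * (F p)⁻¹ * dd P u p := by
  have hFd : DifferentiableAt ℝ F p := hF.differentiableAt (by norm_num)
  have hPd : DifferentiableAt ℝ P p := hP.differentiableAt (by norm_num)
  have dPa := dd_diff hP a
  have dPb := dd_diff hP b
  have dFa := dd_diff hF a
  have dFb := dd_diff hF b
  have hDP : DifferentiableAt ℝ (DOP P a b) p := by
    unfold DOP; exact diff_div_const (dPa.sub (dPb.const_mul Complex.I)) 2
  have hDF : DifferentiableAt ℝ (DOP F a b) p := by
    unfold DOP; exact diff_div_const (dFa.sub (dFb.const_mul Complex.I)) 2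
  have hc : DifferentiableAt ℝ (fun q => (F q)⁻¹) p := hFd.inv h0
  unfold TPL
  rw [dd_sub (h := fun q => DOP F a b q / 2 * (F q)⁻¹ * P q) (diff_div_const hDP 2) (((diff_div_const hDF 2).mul hc).mul hPd),
    dd_div_const hDP (2:ℂ), dd_DOP hP,
    dd_mul (g := fun q => DOP F a b q / 2 * (F q)⁻¹) ((diff_div_const hDF 2).mul hc) hPd,
    dd_mul (diff_div_const hDF 2) hc,
    dd_inv hFd h0,
    dd_div_const hDF (2:ℂ), dd_DOP hF]
  unfold DOP
  ring

lemma div_z1 (a b : Bicomplex) :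
    (a / b).z1 = a.z1 * (b.z1 / (b.z1 ^ 2 + b.z2 ^ 2)) - a.z2 * (-b.z2 / (b.z1 ^ 2 + b.z2 ^ 2)) := rfl

lemma div_z2 (a b : Bicomplex) :
    (a / b).z2 = a.z1 * (-b.z2 / (b.z1 ^ 2 + b.z2 ^ 2)) + a.z2 * (b.z1 / (b.z1 ^ 2 + b.z2 ^ 2)) := rfl

lemma s1_mk (g h : Bicomplex → ℂ) : s1 (fun u => (⟨g u, h u⟩ : Bicomplex)) = g := rfl

lemma s2_mk (g h : Bicomplex → ℂ) : s2 (fun u => (⟨g u, h u⟩ : Bicomplex)) = h := rfl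

lemma DOP_diff {g : ℂ × ℂ → ℂ} {p : ℂ × ℂ} (hg : ContDiffAt ℝ 2 g p) (a b : ℂ × ℂ) :
    DifferentiableAt ℝ (DOP g a b) p := by
  unfold DOP
  exact diff_div_const ((dd_diff hg a).sub ((dd_diff hg b).const_mul Complex.I)) 2

lemma TPL_diff {F P : ℂ × ℂ → ℂ} {p : ℂ × ℂ} (hF : ContDiffAt ℝ 2 F p)
    (hP : ContDiffAt ℝ 2 P p) (h0 : F p ≠ 0) (a b : ℂ × ℂ) :
    DifferentiableAt ℝ (TPL F P a b) p := by
  unfold TPL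
  exact (diff_div_const (DOP_diff hP a b) 2).sub
    (((diff_div_const (DOP_diff hF a b) 2).mul ((hF.differentiableAt (by norm_num)).inv h0)).mul
      (hP.differentiableAt (by norm_num)))

end SchroedingerAux





set_option maxHeartbeats 4000000 in
/-- Factorization of the complexified Schrödinger operator: if `f₀` is a
nonvanishing `C²` solution of `(Δ_ℂ - ν)f₀ = 0` on `Ω`, then for every `ℂ(i₁)`-valued `C²`
function `φ` on `Ω`,
`(Δ_ℂ - ν)φ = 4(∂_ω̄ + (∂_ω f₀/f₀)C)(∂_ω - (∂_ω f₀/f₀)C)φ`. -/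
theorem factorization_complexified_schrodinger (Ω : Set Bicomplex) (hΩ : IsOpen Ω)
    (ν f₀ : Bicomplex → ℂ)
    (hf₀sm : CContDiffOn 2 f₀ Ω)
    (hf₀ne : ∀ w ∈ Ω, f₀ w ≠ 0)
    (hf₀sol : ∀ w ∈ Ω, lapC f₀ w - ν w * f₀ w = 0)
    (φ : Bicomplex → ℂ) (hφ : CContDiffOn 2 φ Ω) :
    ∀ w ∈ Ω,
      ofComplex (lapC φ w - ν w * φ w) =
        ofComplex 4 *
          (dOmBar
              (fun v =>
                dOm (fun u => ofComplex (φ u)) v -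
                  (dOm (fun u => ofComplex (f₀ u)) v / ofComplex (f₀ v)) *
                    dag2 (ofComplex (φ v))) w +
            (dOm (fun u => ofComplex (f₀ u)) w / ofComplex (f₀ w)) *
              dag2
                (dOm (fun u => ofComplex (φ u)) w -
                  (dOm (fun u => ofComplex (f₀ u)) w / ofComplex (f₀ w)) *
                    dag2 (ofComplex (φ w)))) := by
  intro w hw
  have hweta : (⟨w.z1, w.z2⟩ : Bicomplex) = w := rfl
  have hf0w : f₀ w ≠ 0 := hf₀ne w hw
  have hUopen : IsOpen {q : ℂ × ℂ | (⟨q.1, q.2⟩ : Bicomplex) ∈ Ω} :=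
    hΩ.preimage SchroedingerAux.continuous_ofProd
  have himg : toProd '' Ω = {q : ℂ × ℂ | (⟨q.1, q.2⟩ : Bicomplex) ∈ Ω} := by
    ext q
    constructor
    · rintro ⟨v, hv, rfl⟩
      exact hv
    · intro hq
      exact ⟨ofProd q, hq, rfl⟩
  have hFsm : ContDiffOn ℝ 2 (fun q : ℂ × ℂ => f₀ ⟨q.1, q.2⟩)
      {q : ℂ × ℂ | (⟨q.1, q.2⟩ : Bicomplex) ∈ Ω} := by
    rw [← himg]; exact hf₀sm
  have hPsm : ContDiffOn ℝ 2 (fun q : ℂ × ℂ => φ ⟨q.1, q.2⟩)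
      {q : ℂ × ℂ | (⟨q.1, q.2⟩ : Bicomplex) ∈ Ω} := by
    rw [← himg]; exact hφ
  have hF2 : ∀ v : Bicomplex, v ∈ Ω →
      ContDiffAt ℝ 2 (fun q : ℂ × ℂ => f₀ ⟨q.1, q.2⟩) (v.z1, v.z2) :=
    fun v hv => hFsm.contDiffAt (hUopen.mem_nhds hv)
  have hP2 : ∀ v : Bicomplex, v ∈ Ω →
      ContDiffAt ℝ 2 (fun q : ℂ × ℂ => φ ⟨q.1, q.2⟩) (v.z1, v.z2) :=
    fun v hv => hPsm.contDiffAt (hUopen.mem_nhds hv)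
  have hFd : ∀ v : Bicomplex, v ∈ Ω →
      DifferentiableAt ℝ (fun q : ℂ × ℂ => f₀ ⟨q.1, q.2⟩) (v.z1, v.z2) :=
    fun v hv => (hF2 v hv).differentiableAt (by norm_num)
  have hPd : ∀ v : Bicomplex, v ∈ Ω →
      DifferentiableAt ℝ (fun q : ℂ × ℂ => φ ⟨q.1, q.2⟩) (v.z1, v.z2) :=
    fun v hv => (hP2 v hv).differentiableAt (by norm_num)
  have hInner : (fun v => dOm (fun u => ofComplex (φ u)) v -
        dOm (fun u => ofComplex (f₀ u)) v / ofComplex (f₀ v) * dag2 (ofComplex (φ v))) =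
      (fun v => (⟨dz1 φ v / 2 - dz1 f₀ v / 2 * (f₀ v / (f₀ v ^ 2 + 0 ^ 2)) * φ v,
        -(dz2 φ v / 2 - dz2 f₀ v / 2 * (f₀ v / (f₀ v ^ 2 + 0 ^ 2)) * φ v)⟩ : Bicomplex)) := by
    funext v
    apply Bicomplex.ext <;>
      simp only [dOm, dZ1, dZ2, SchroedingerAux.s1_mk, SchroedingerAux.s2_mk,
        SchroedingerAux.dz1_zero,
        SchroedingerAux.dz2_zero, ofComplex, dag2, i2, sub_eq_add_neg, mul_z1, mul_z2,
        add_z1, add_z2, neg_z1, neg_z2, SchroedingerAux.div_z1, SchroedingerAux.div_z2] <;>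
      ring
  have hInnw := congrFun hInner w
  rw [hInnw, hInner]
  have heq1 : ∀ᶠ v in nhds w, (Bicomplex.dz1 φ v / 2 + -(Bicomplex.dz1 f₀ v / 2 * (f₀ v / (f₀ v ^ 2 + 0 ^ 2)) * φ v)) = SchroedingerAux.TPL (fun q : ℂ × ℂ => f₀ ⟨q.1, q.2⟩) (fun q : ℂ × ℂ => φ ⟨q.1, q.2⟩) (1, 0) (Complex.I, 0) (v.z1, v.z2) := by
    filter_upwards [hΩ.mem_nhds hw] with v hv
    have hveta : (⟨v.z1, v.z2⟩ : Bicomplex) = v := rfl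
    have hne : f₀ v ≠ 0 := hf₀ne v hv
    rw [SchroedingerAux.dz1_eq (hPd v hv), SchroedingerAux.dz1_eq (hFd v hv)]
    unfold SchroedingerAux.TPL SchroedingerAux.DOP
    simp only [hveta]
    field_simp [hne]
    ring
  have heq2 : ∀ᶠ v in nhds w, (Bicomplex.dz2 φ v / 2 + -(Bicomplex.dz2 f₀ v / 2 * (f₀ v / (f₀ v ^ 2 + 0 ^ 2)) * φ v)) = SchroedingerAux.TPL (fun q : ℂ × ℂ => f₀ ⟨q.1, q.2⟩) (fun q : ℂ × ℂ => φ ⟨q.1, q.2⟩) (0, 1) (0, Complex.I) (v.z1, v.z2) := by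
    filter_upwards [hΩ.mem_nhds hw] with v hv
    have hveta : (⟨v.z1, v.z2⟩ : Bicomplex) = v := rfl
    have hne : f₀ v ≠ 0 := hf₀ne v hv
    rw [SchroedingerAux.dz2_eq (hPd v hv), SchroedingerAux.dz2_eq (hFd v hv)]
    unfold SchroedingerAux.TPL SchroedingerAux.DOP
    simp only [hveta]
    field_simp [hne]
    ring
  have e11 : Bicomplex.dz1 (fun u => Bicomplex.dz1 φ u / 2 + -(Bicomplex.dz1 f₀ u / 2 * (f₀ u / (f₀ u ^ 2 + 0 ^ 2)) * φ u)) w = (SchroedingerAux.dd (SchroedingerAux.TPL (fun q : ℂ × ℂ => f₀ ⟨q.1, q.2⟩) (fun q : ℂ × ℂ => φ ⟨q.1, q.2⟩) (1, 0) (Complex.I, 0)) (1, 0) (w.z1, w.z2) - Complex.I * SchroedingerAux.dd (SchroedingerAux.TPL (fun q : ℂ × ℂ => f₀ ⟨q.1, q.2⟩) (fun q : ℂ × ℂ => φ ⟨q.1, q.2⟩) (1, 0) (Complex.I, 0)) (Complex.I, 0) (w.z1, w.z2)) / 2 := by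
    rw [SchroedingerAux.dz1_congr heq1]
    exact SchroedingerAux.dz1_eq (by exact SchroedingerAux.TPL_diff (hF2 w hw) (hP2 w hw) hf0w (1, 0) (Complex.I, 0))
  have e12 : Bicomplex.dz2 (fun u => Bicomplex.dz1 φ u / 2 + -(Bicomplex.dz1 f₀ u / 2 * (f₀ u / (f₀ u ^ 2 + 0 ^ 2)) * φ u)) w = (SchroedingerAux.dd (SchroedingerAux.TPL (fun q : ℂ × ℂ => f₀ ⟨q.1, q.2⟩) (fun q : ℂ × ℂ => φ ⟨q.1, q.2⟩) (1, 0) (Complex.I, 0)) (0, 1) (w.z1, w.z2) - Complex.I * SchroedingerAux.dd (SchroedingerAux.TPL (fun q : ℂ × ℂ => f₀ ⟨q.1, q.2⟩) (fun q : ℂ × ℂ => φ ⟨q.1, q.2⟩) (1, 0) (Complex.I, 0)) (0, Complex.I) (w.z1, w.z2)) / 2 := by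
    rw [SchroedingerAux.dz2_congr heq1]
    exact SchroedingerAux.dz2_eq (by exact SchroedingerAux.TPL_diff (hF2 w hw) (hP2 w hw) hf0w (1, 0) (Complex.I, 0))
  have e21 : Bicomplex.dz1 (fun v => Bicomplex.dz2 φ v / 2 + -(Bicomplex.dz2 f₀ v / 2 * (f₀ v / (f₀ v ^ 2 + 0 ^ 2)) * φ v)) w = (SchroedingerAux.dd (SchroedingerAux.TPL (fun q : ℂ × ℂ => f₀ ⟨q.1, q.2⟩) (fun q : ℂ × ℂ => φ ⟨q.1, q.2⟩) (0, 1) (0, Complex.I)) (1, 0) (w.z1, w.z2) - Complex.I * SchroedingerAux.dd (SchroedingerAux.TPL (fun q : ℂ × ℂ => f₀ ⟨q.1, q.2⟩) (fun q : ℂ × ℂ => φ ⟨q.1, q.2⟩) (0, 1) (0, Complex.I)) (Complex.I, 0) (w.z1, w.z2)) / 2 := by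
    rw [SchroedingerAux.dz1_congr heq2]
    exact SchroedingerAux.dz1_eq (by exact SchroedingerAux.TPL_diff (hF2 w hw) (hP2 w hw) hf0w (0, 1) (0, Complex.I))
  have e22 : Bicomplex.dz2 (fun v => Bicomplex.dz2 φ v / 2 + -(Bicomplex.dz2 f₀ v / 2 * (f₀ v / (f₀ v ^ 2 + 0 ^ 2)) * φ v)) w = (SchroedingerAux.dd (SchroedingerAux.TPL (fun q : ℂ × ℂ => f₀ ⟨q.1, q.2⟩) (fun q : ℂ × ℂ => φ ⟨q.1, q.2⟩) (0, 1) (0, Complex.I)) (0, 1) (w.z1, w.z2) - Complex.I * SchroedingerAux.dd (SchroedingerAux.TPL (fun q : ℂ × ℂ => f₀ ⟨q.1, q.2⟩) (fun q : ℂ × ℂ => φ ⟨q.1, q.2⟩) (0, 1) (0, Complex.I)) (0, Complex.I) (w.z1, w.z2)) / 2 := by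
    rw [SchroedingerAux.dz2_congr heq2]
    exact SchroedingerAux.dz2_eq (by exact SchroedingerAux.TPL_diff (hF2 w hw) (hP2 w hw) hf0w (0, 1) (0, Complex.I))
  have heqD1P : ∀ᶠ v in nhds w, Bicomplex.dz1 φ v = SchroedingerAux.DOP (fun q : ℂ × ℂ => φ ⟨q.1, q.2⟩) (1, 0) (Complex.I, 0) (v.z1, v.z2) := by
    filter_upwards [hΩ.mem_nhds hw] with v hv
    rw [SchroedingerAux.dz1_eq (hPd v hv)]
    rfl
  have heqD2P : ∀ᶠ v in nhds w, Bicomplex.dz2 φ v = SchroedingerAux.DOP (fun q : ℂ × ℂ => φ ⟨q.1, q.2⟩) (0, 1) (0, Complex.I) (v.z1, v.z2) := by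
    filter_upwards [hΩ.mem_nhds hw] with v hv
    rw [SchroedingerAux.dz2_eq (hPd v hv)]
    rfl
  have heqD1F : ∀ᶠ v in nhds w, Bicomplex.dz1 f₀ v = SchroedingerAux.DOP (fun q : ℂ × ℂ => f₀ ⟨q.1, q.2⟩) (1, 0) (Complex.I, 0) (v.z1, v.z2) := by
    filter_upwards [hΩ.mem_nhds hw] with v hv
    rw [SchroedingerAux.dz1_eq (hFd v hv)]
    rfl
  have heqD2F : ∀ᶠ v in nhds w, Bicomplex.dz2 f₀ v = SchroedingerAux.DOP (fun q : ℂ × ℂ => f₀ ⟨q.1, q.2⟩) (0, 1) (0, Complex.I) (v.z1, v.z2) := by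
    filter_upwards [hΩ.mem_nhds hw] with v hv
    rw [SchroedingerAux.dz2_eq (hFd v hv)]
    rfl
  have hlapP : Bicomplex.lapC φ w =
      (SchroedingerAux.dd (SchroedingerAux.DOP (fun q : ℂ × ℂ => φ ⟨q.1, q.2⟩) (1, 0) (Complex.I, 0)) (1, 0) (w.z1, w.z2) - Complex.I * SchroedingerAux.dd (SchroedingerAux.DOP (fun q : ℂ × ℂ => φ ⟨q.1, q.2⟩) (1, 0) (Complex.I, 0)) (Complex.I, 0) (w.z1, w.z2)) / 2
      + (SchroedingerAux.dd (SchroedingerAux.DOP (fun q : ℂ × ℂ => φ ⟨q.1, q.2⟩) (0, 1) (0, Complex.I)) (0, 1) (w.z1, w.z2) - Complex.I * SchroedingerAux.dd (SchroedingerAux.DOP (fun q : ℂ × ℂ => φ ⟨q.1, q.2⟩) (0, 1) (0, Complex.I)) (0, Complex.I) (w.z1, w.z2)) / 2 := by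
    have hA : Bicomplex.dz1 (Bicomplex.dz1 φ) w = (SchroedingerAux.dd (SchroedingerAux.DOP (fun q : ℂ × ℂ => φ ⟨q.1, q.2⟩) (1, 0) (Complex.I, 0)) (1, 0) (w.z1, w.z2) - Complex.I * SchroedingerAux.dd (SchroedingerAux.DOP (fun q : ℂ × ℂ => φ ⟨q.1, q.2⟩) (1, 0) (Complex.I, 0)) (Complex.I, 0) (w.z1, w.z2)) / 2 :=
      (SchroedingerAux.dz1_congr heqD1P).trans
        (SchroedingerAux.dz1_eq (by exact SchroedingerAux.DOP_diff (hP2 w hw) (1, 0) (Complex.I, 0)))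
    have hB : Bicomplex.dz2 (Bicomplex.dz2 φ) w = (SchroedingerAux.dd (SchroedingerAux.DOP (fun q : ℂ × ℂ => φ ⟨q.1, q.2⟩) (0, 1) (0, Complex.I)) (0, 1) (w.z1, w.z2) - Complex.I * SchroedingerAux.dd (SchroedingerAux.DOP (fun q : ℂ × ℂ => φ ⟨q.1, q.2⟩) (0, 1) (0, Complex.I)) (0, Complex.I) (w.z1, w.z2)) / 2 :=
      (SchroedingerAux.dz2_congr heqD2P).trans
        (SchroedingerAux.dz2_eq (by exact SchroedingerAux.DOP_diff (hP2 w hw) (0, 1) (0, Complex.I)))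
    show Bicomplex.dz1 (Bicomplex.dz1 φ) w + Bicomplex.dz2 (Bicomplex.dz2 φ) w = _
    rw [hA, hB]
  have hlapF : Bicomplex.lapC f₀ w =
      (SchroedingerAux.dd (SchroedingerAux.DOP (fun q : ℂ × ℂ => f₀ ⟨q.1, q.2⟩) (1, 0) (Complex.I, 0)) (1, 0) (w.z1, w.z2) - Complex.I * SchroedingerAux.dd (SchroedingerAux.DOP (fun q : ℂ × ℂ => f₀ ⟨q.1, q.2⟩) (1, 0) (Complex.I, 0)) (Complex.I, 0) (w.z1, w.z2)) / 2
      + (SchroedingerAux.dd (SchroedingerAux.DOP (fun q : ℂ × ℂ => f₀ ⟨q.1, q.2⟩) (0, 1) (0, Complex.I)) (0, 1) (w.z1, w.z2) - Complex.I * SchroedingerAux.dd (SchroedingerAux.DOP (fun q : ℂ × ℂ => f₀ ⟨q.1, q.2⟩) (0, 1) (0, Complex.I)) (0, Complex.I) (w.z1, w.z2)) / 2 := by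
    have hA : Bicomplex.dz1 (Bicomplex.dz1 f₀) w = (SchroedingerAux.dd (SchroedingerAux.DOP (fun q : ℂ × ℂ => f₀ ⟨q.1, q.2⟩) (1, 0) (Complex.I, 0)) (1, 0) (w.z1, w.z2) - Complex.I * SchroedingerAux.dd (SchroedingerAux.DOP (fun q : ℂ × ℂ => f₀ ⟨q.1, q.2⟩) (1, 0) (Complex.I, 0)) (Complex.I, 0) (w.z1, w.z2)) / 2 :=
      (SchroedingerAux.dz1_congr heqD1F).trans
        (SchroedingerAux.dz1_eq (by exact SchroedingerAux.DOP_diff (hF2 w hw) (1, 0) (Complex.I, 0)))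
    have hB : Bicomplex.dz2 (Bicomplex.dz2 f₀) w = (SchroedingerAux.dd (SchroedingerAux.DOP (fun q : ℂ × ℂ => f₀ ⟨q.1, q.2⟩) (0, 1) (0, Complex.I)) (0, 1) (w.z1, w.z2) - Complex.I * SchroedingerAux.dd (SchroedingerAux.DOP (fun q : ℂ × ℂ => f₀ ⟨q.1, q.2⟩) (0, 1) (0, Complex.I)) (0, Complex.I) (w.z1, w.z2)) / 2 :=
      (SchroedingerAux.dz2_congr heqD2F).trans
        (SchroedingerAux.dz2_eq (by exact SchroedingerAux.DOP_diff (hF2 w hw) (0, 1) (0, Complex.I)))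
    show Bicomplex.dz1 (Bicomplex.dz1 f₀) w + Bicomplex.dz2 (Bicomplex.dz2 f₀) w = _
    rw [hA, hB]
  have hν : ν w = Bicomplex.lapC f₀ w / f₀ w := by
    rw [eq_div_iff hf0w]
    linear_combination -(hf₀sol w hw)
  have sP21 : SchroedingerAux.dd (fun q => SchroedingerAux.dd (fun q : ℂ × ℂ => φ ⟨q.1, q.2⟩) (Complex.I, 0) q) (1, 0) (w.z1, w.z2) = SchroedingerAux.dd (fun q => SchroedingerAux.dd (fun q : ℂ × ℂ => φ ⟨q.1, q.2⟩) (1, 0) q) (Complex.I, 0) (w.z1, w.z2) :=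
    SchroedingerAux.dd_dd_symm (hP2 w hw) (Complex.I, 0) (1, 0)
  have sP31 : SchroedingerAux.dd (fun q => SchroedingerAux.dd (fun q : ℂ × ℂ => φ ⟨q.1, q.2⟩) (0, 1) q) (1, 0) (w.z1, w.z2) = SchroedingerAux.dd (fun q => SchroedingerAux.dd (fun q : ℂ × ℂ => φ ⟨q.1, q.2⟩) (1, 0) q) (0, 1) (w.z1, w.z2) :=
    SchroedingerAux.dd_dd_symm (hP2 w hw) (0, 1) (1, 0)
  have sP41 : SchroedingerAux.dd (fun q => SchroedingerAux.dd (fun q : ℂ × ℂ => φ ⟨q.1, q.2⟩) (0, Complex.I) q) (1, 0) (w.z1, w.z2) = SchroedingerAux.dd (fun q => SchroedingerAux.dd (fun q : ℂ × ℂ => φ ⟨q.1, q.2⟩) (1, 0) q) (0, Complex.I) (w.z1, w.z2) :=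
    SchroedingerAux.dd_dd_symm (hP2 w hw) (0, Complex.I) (1, 0)
  have sP32 : SchroedingerAux.dd (fun q => SchroedingerAux.dd (fun q : ℂ × ℂ => φ ⟨q.1, q.2⟩) (0, 1) q) (Complex.I, 0) (w.z1, w.z2) = SchroedingerAux.dd (fun q => SchroedingerAux.dd (fun q : ℂ × ℂ => φ ⟨q.1, q.2⟩) (Complex.I, 0) q) (0, 1) (w.z1, w.z2) :=
    SchroedingerAux.dd_dd_symm (hP2 w hw) (0, 1) (Complex.I, 0)
  have sP42 : SchroedingerAux.dd (fun q => SchroedingerAux.dd (fun q : ℂ × ℂ => φ ⟨q.1, q.2⟩) (0, Complex.I) q) (Complex.I, 0) (w.z1, w.z2) = SchroedingerAux.dd (fun q => SchroedingerAux.dd (fun q : ℂ × ℂ => φ ⟨q.1, q.2⟩) (Complex.I, 0) q) (0, Complex.I) (w.z1, w.z2) :=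
    SchroedingerAux.dd_dd_symm (hP2 w hw) (0, Complex.I) (Complex.I, 0)
  have sP43 : SchroedingerAux.dd (fun q => SchroedingerAux.dd (fun q : ℂ × ℂ => φ ⟨q.1, q.2⟩) (0, Complex.I) q) (0, 1) (w.z1, w.z2) = SchroedingerAux.dd (fun q => SchroedingerAux.dd (fun q : ℂ × ℂ => φ ⟨q.1, q.2⟩) (0, 1) q) (0, Complex.I) (w.z1, w.z2) :=
    SchroedingerAux.dd_dd_symm (hP2 w hw) (0, Complex.I) (0, 1)
  have sF21 : SchroedingerAux.dd (fun q => SchroedingerAux.dd (fun q : ℂ × ℂ => f₀ ⟨q.1, q.2⟩) (Complex.I, 0) q) (1, 0) (w.z1, w.z2) = SchroedingerAux.dd (fun q => SchroedingerAux.dd (fun q : ℂ × ℂ => f₀ ⟨q.1, q.2⟩) (1, 0) q) (Complex.I, 0) (w.z1, w.z2) :=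
    SchroedingerAux.dd_dd_symm (hF2 w hw) (Complex.I, 0) (1, 0)
  have sF31 : SchroedingerAux.dd (fun q => SchroedingerAux.dd (fun q : ℂ × ℂ => f₀ ⟨q.1, q.2⟩) (0, 1) q) (1, 0) (w.z1, w.z2) = SchroedingerAux.dd (fun q => SchroedingerAux.dd (fun q : ℂ × ℂ => f₀ ⟨q.1, q.2⟩) (1, 0) q) (0, 1) (w.z1, w.z2) :=
    SchroedingerAux.dd_dd_symm (hF2 w hw) (0, 1) (1, 0)
  have sF41 : SchroedingerAux.dd (fun q => SchroedingerAux.dd (fun q : ℂ × ℂ => f₀ ⟨q.1, q.2⟩) (0, Complex.I) q) (1, 0) (w.z1, w.z2) = SchroedingerAux.dd (fun q => SchroedingerAux.dd (fun q : ℂ × ℂ => f₀ ⟨q.1, q.2⟩) (1, 0) q) (0, Complex.I) (w.z1, w.z2) :=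
    SchroedingerAux.dd_dd_symm (hF2 w hw) (0, Complex.I) (1, 0)
  have sF32 : SchroedingerAux.dd (fun q => SchroedingerAux.dd (fun q : ℂ × ℂ => f₀ ⟨q.1, q.2⟩) (0, 1) q) (Complex.I, 0) (w.z1, w.z2) = SchroedingerAux.dd (fun q => SchroedingerAux.dd (fun q : ℂ × ℂ => f₀ ⟨q.1, q.2⟩) (Complex.I, 0) q) (0, 1) (w.z1, w.z2) :=
    SchroedingerAux.dd_dd_symm (hF2 w hw) (0, 1) (Complex.I, 0)
  have sF42 : SchroedingerAux.dd (fun q => SchroedingerAux.dd (fun q : ℂ × ℂ => f₀ ⟨q.1, q.2⟩) (0, Complex.I) q) (Complex.I, 0) (w.z1, w.z2) = SchroedingerAux.dd (fun q => SchroedingerAux.dd (fun q : ℂ × ℂ => f₀ ⟨q.1, q.2⟩) (Complex.I, 0) q) (0, Complex.I) (w.z1, w.z2) :=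
    SchroedingerAux.dd_dd_symm (hF2 w hw) (0, Complex.I) (Complex.I, 0)
  have sF43 : SchroedingerAux.dd (fun q => SchroedingerAux.dd (fun q : ℂ × ℂ => f₀ ⟨q.1, q.2⟩) (0, Complex.I) q) (0, 1) (w.z1, w.z2) = SchroedingerAux.dd (fun q => SchroedingerAux.dd (fun q : ℂ × ℂ => f₀ ⟨q.1, q.2⟩) (0, 1) q) (0, Complex.I) (w.z1, w.z2) :=
    SchroedingerAux.dd_dd_symm (hF2 w hw) (0, Complex.I) (0, 1)
  apply Bicomplex.ext <;>
    simp only [dOm, dOmBar, dZ1, dZ2, SchroedingerAux.s1_mk, SchroedingerAux.s2_mk,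
      SchroedingerAux.dz1_zero, SchroedingerAux.dz2_zero, ofComplex, dag2, i2, sub_eq_add_neg,
      mul_z1, mul_z2, add_z1, add_z2, neg_z1, neg_z2, SchroedingerAux.div_z1,
      SchroedingerAux.div_z2, SchroedingerAux.dz1_neg, SchroedingerAux.dz2_neg]
  ·
    try simp only [hν, hlapP, hlapF]
    simp only [e11, e12, e21, e22]
    simp only [SchroedingerAux.dz1_eq (hPd w hw), SchroedingerAux.dz2_eq (hPd w hw),
      SchroedingerAux.dz1_eq (hFd w hw), SchroedingerAux.dz2_eq (hFd w hw)]
    simp only [SchroedingerAux.dd_TPL (hF2 w hw) (hP2 w hw) hf0w,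
      SchroedingerAux.dd_DOP (hP2 w hw), SchroedingerAux.dd_DOP (hF2 w hw)]
    simp only [hweta]
    simp only [sP21, sP31, sP41, sP32, sP42, sP43, sF21, sF31, sF41, sF32, sF42, sF43]
    have hinv : f₀ w * (f₀ w)⁻¹ = 1 := mul_inv_cancel₀ hf0w
    ring_nf
    linear_combination ((((-1 : ℂ) / 2) * (SchroedingerAux.dd (fun q : ℂ × ℂ => f₀ ⟨q.1, q.2⟩) ((1 : ℂ), (0 : ℂ)) (w.z1, w.z2)) * (SchroedingerAux.dd (fun q : ℂ × ℂ => f₀ ⟨q.1, q.2⟩) (Complex.I, (0 : ℂ)) (w.z1, w.z2)) * Complex.I * (f₀ w) ^ 0 * (φ w) * (f₀ w)⁻¹ ^ 2 + ((-1 : ℂ) / 2) * (SchroedingerAux.dd (fun q : ℂ × ℂ => f₀ ⟨q.1, q.2⟩) ((1 : ℂ), (0 : ℂ)) (w.z1, w.z2)) * (SchroedingerAux.dd (fun q : ℂ × ℂ => f₀ ⟨q.1, q.2⟩) (Complex.I, (0 : ℂ)) (w.z1, w.z2)) * Complex.I * (f₀ w) * (φ w) * (f₀ w)⁻¹ ^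 3 + ((-1 : ℂ) / 4) * (SchroedingerAux.dd (fun q : ℂ × ℂ => f₀ ⟨q.1, q.2⟩) ((1 : ℂ), (0 : ℂ)) (w.z1, w.z2)) * (SchroedingerAux.dd (fun q : ℂ × ℂ => φ ⟨q.1, q.2⟩) ((1 : ℂ), (0 : ℂ)) (w.z1, w.z2)) * (f₀ w) ^ 0 * (f₀ w)⁻¹ + ((1 : ℂ) / 4) * (SchroedingerAux.dd (fun q : ℂ × ℂ => f₀ ⟨q.1, q.2⟩) ((1 : ℂ), (0 : ℂ)) (w.z1, w.z2)) * (SchroedingerAux.dd (fun q : ℂ × ℂ => φ ⟨q.1, q.2⟩) (Complex.I, (0 : ℂ)) (w.z1, w.z2)) * Complex.I * (f₀ w) ^ 0 * (f₀ w)⁻¹ + ((1 : ℂ) / 4) * (SchroedingerAux.dd (fun q : ℂ × ℂ => f₀ ⟨q.1, q.2⟩) ((1 : ℂ), (0 : ℂ)) (w.z1, w.z2)) ^ 2 * (f₀ w) ^ 0 * (φ w) * (f₀ w)⁻¹ ^ 2 + ((1 : ℂ) / 4) * (SchroedingerAux.dd (fun q : ℂ × ℂ => f₀ ⟨q.1,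 q.2⟩) ((1 : ℂ), (0 : ℂ)) (w.z1, w.z2)) ^ 2 * (f₀ w) * (φ w) * (f₀ w)⁻¹ ^ 3 + ((1 : ℂ) / 4) * (SchroedingerAux.dd (fun q : ℂ × ℂ => f₀ ⟨q.1, q.2⟩) (Complex.I, (0 : ℂ)) (w.z1, w.z2)) * (SchroedingerAux.dd (fun q : ℂ × ℂ => φ ⟨q.1, q.2⟩) ((1 : ℂ), (0 : ℂ)) (w.z1, w.z2)) * Complex.I * (f₀ w) ^ 0 * (f₀ w)⁻¹ + ((-1 : ℂ) / 4) * (SchroedingerAux.dd (fun q : ℂ × ℂ => f₀ ⟨q.1, q.2⟩) (Complex.I, (0 : ℂ)) (w.z1, w.z2)) * (SchroedingerAux.dd (fun q : ℂ × ℂ => φ ⟨q.1, q.2⟩) (Complex.I, (0 : ℂ)) (w.z1, w.z2)) * Complex.I ^ 2 * (f₀ w) ^ 0 * (f₀ w)⁻¹ + ((1 : ℂ) / 4) * (SchroedingerAux.dd (fun q : ℂ × ℂ => f₀ ⟨q.1, q.2⟩) (Complex.I, (0 : ℂ)) (w.z1, w.z2)) ^ 2 * Complex.I ^ 2 * (f₀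 w) ^ 0 * (φ w) * (f₀ w)⁻¹ ^ 2 + ((1 : ℂ) / 4) * (SchroedingerAux.dd (fun q : ℂ × ℂ => f₀ ⟨q.1, q.2⟩) (Complex.I, (0 : ℂ)) (w.z1, w.z2)) ^ 2 * Complex.I ^ 2 * (f₀ w) * (φ w) * (f₀ w)⁻¹ ^ 3 + ((-1 : ℂ) / 2) * (SchroedingerAux.dd (fun q : ℂ × ℂ => f₀ ⟨q.1, q.2⟩) ((0 : ℂ), (1 : ℂ)) (w.z1, w.z2)) * (SchroedingerAux.dd (fun q : ℂ × ℂ => f₀ ⟨q.1, q.2⟩) ((0 : ℂ), Complex.I) (w.z1, w.z2)) * Complex.I * (f₀ w) ^ 0 * (φ w) * (f₀ w)⁻¹ ^ 2 + ((-1 : ℂ) / 2) * (SchroedingerAux.dd (fun q : ℂ × ℂ => f₀ ⟨q.1, q.2⟩) ((0 : ℂ), (1 : ℂ)) (w.z1, w.z2)) * (SchroedingerAux.dd (fun q : ℂ × ℂ => f₀ ⟨q.1, q.2⟩) ((0 : ℂ), Complex.I) (w.z1, w.z2)) * Complex.I * (f₀ w) * (φ w) * (f₀ w)⁻¹ ^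 3 + ((-1 : ℂ) / 4) * (SchroedingerAux.dd (fun q : ℂ × ℂ => f₀ ⟨q.1, q.2⟩) ((0 : ℂ), (1 : ℂ)) (w.z1, w.z2)) * (SchroedingerAux.dd (fun q : ℂ × ℂ => φ ⟨q.1, q.2⟩) ((0 : ℂ), (1 : ℂ)) (w.z1, w.z2)) * (f₀ w) ^ 0 * (f₀ w)⁻¹ + ((1 : ℂ) / 4) * (SchroedingerAux.dd (fun q : ℂ × ℂ => f₀ ⟨q.1, q.2⟩) ((0 : ℂ), (1 : ℂ)) (w.z1, w.z2)) * (SchroedingerAux.dd (fun q : ℂ × ℂ => φ ⟨q.1, q.2⟩) ((0 : ℂ), Complex.I) (w.z1, w.z2)) * Complex.I * (f₀ w) ^ 0 * (f₀ w)⁻¹ + ((1 : ℂ) / 4) * (SchroedingerAux.dd (fun q : ℂ × ℂ => f₀ ⟨q.1, q.2⟩) ((0 : ℂ), (1 : ℂ)) (w.z1, w.z2)) ^ 2 * (f₀ w) ^ 0 * (φ w) * (f₀ w)⁻¹ ^ 2 + ((1 : ℂ) / 4) * (SchroedingerAux.dd (fun q : ℂ × ℂ => f₀ ⟨q.1, q.2⟩)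 ((0 : ℂ), (1 : ℂ)) (w.z1, w.z2)) ^ 2 * (f₀ w) * (φ w) * (f₀ w)⁻¹ ^ 3 + ((1 : ℂ) / 4) * (SchroedingerAux.dd (fun q : ℂ × ℂ => f₀ ⟨q.1, q.2⟩) ((0 : ℂ), Complex.I) (w.z1, w.z2)) * (SchroedingerAux.dd (fun q : ℂ × ℂ => φ ⟨q.1, q.2⟩) ((0 : ℂ), (1 : ℂ)) (w.z1, w.z2)) * Complex.I * (f₀ w) ^ 0 * (f₀ w)⁻¹ + ((-1 : ℂ) / 4) * (SchroedingerAux.dd (fun q : ℂ × ℂ => f₀ ⟨q.1, q.2⟩) ((0 : ℂ), Complex.I) (w.z1, w.z2)) * (SchroedingerAux.dd (fun q : ℂ × ℂ => φ ⟨q.1, q.2⟩) ((0 : ℂ), Complex.I) (w.z1, w.z2)) * Complex.I ^ 2 * (f₀ w) ^ 0 * (f₀ w)⁻¹ + ((1 : ℂ) / 4) * (SchroedingerAux.dd (fun q : ℂ × ℂ => f₀ ⟨q.1, q.2⟩) ((0 : ℂ), Complex.I) (w.z1, w.z2)) ^ 2 * Complex.I ^ 2 * (f₀ w) ^ 0 *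 (φ w) * (f₀ w)⁻¹ ^ 2 + ((1 : ℂ) / 4) * (SchroedingerAux.dd (fun q : ℂ × ℂ => f₀ ⟨q.1, q.2⟩) ((0 : ℂ), Complex.I) (w.z1, w.z2)) ^ 2 * Complex.I ^ 2 * (f₀ w) * (φ w) * (f₀ w)⁻¹ ^ 3)) * hinv
  ·
    try simp only [hν, hlapP, hlapF]
    simp only [e11, e12, e21, e22]
    simp only [SchroedingerAux.dz1_eq (hPd w hw), SchroedingerAux.dz2_eq (hPd w hw),
      SchroedingerAux.dz1_eq (hFd w hw), SchroedingerAux.dz2_eq (hFd w hw)]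
    simp only [SchroedingerAux.dd_TPL (hF2 w hw) (hP2 w hw) hf0w,
      SchroedingerAux.dd_DOP (hP2 w hw), SchroedingerAux.dd_DOP (hF2 w hw)]
    simp only [hweta]
    simp only [sP21, sP31, sP41, sP32, sP42, sP43, sF21, sF31, sF41, sF32, sF42, sF43]
    have hinv : f₀ w * (f₀ w)⁻¹ = 1 := mul_inv_cancel₀ hf0w
    ring_nf
    linear_combination ((((-1 : ℂ) / 4) * (SchroedingerAux.dd (fun q : ℂ × ℂ => f₀ ⟨q.1, q.2⟩) ((1 : ℂ), (0 : ℂ)) (w.z1, w.z2)) * (SchroedingerAux.dd (fun q : ℂ × ℂ => φ ⟨q.1, q.2⟩) ((0 : ℂ), (1 : ℂ)) (w.z1, w.z2)) * (f₀ w) ^ 0 * (f₀ w)⁻¹ + ((1 : ℂ) / 4) * (SchroedingerAux.dd (fun q : ℂ × ℂ => f₀ ⟨q.1, q.2⟩) ((1 : ℂ), (0 : ℂ)) (w.z1, w.z2)) * (SchroedingerAux.dd (fun q : ℂ × ℂ => φ ⟨q.1, q.2⟩) ((0 : ℂ), Complex.I) (w.z1, w.z2)) * Complex.I * (f₀ w)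 ^ 0 * (f₀ w)⁻¹ + ((1 : ℂ) / 4) * (SchroedingerAux.dd (fun q : ℂ × ℂ => f₀ ⟨q.1, q.2⟩) (Complex.I, (0 : ℂ)) (w.z1, w.z2)) * (SchroedingerAux.dd (fun q : ℂ × ℂ => φ ⟨q.1, q.2⟩) ((0 : ℂ), (1 : ℂ)) (w.z1, w.z2)) * Complex.I * (f₀ w) ^ 0 * (f₀ w)⁻¹ + ((-1 : ℂ) / 4) * (SchroedingerAux.dd (fun q : ℂ × ℂ => f₀ ⟨q.1, q.2⟩) (Complex.I, (0 : ℂ)) (w.z1, w.z2)) * (SchroedingerAux.dd (fun q : ℂ × ℂ => φ ⟨q.1, q.2⟩) ((0 : ℂ), Complex.I) (w.z1, w.z2)) * Complex.I ^ 2 * (f₀ w) ^ 0 * (f₀ w)⁻¹ + ((1 : ℂ) / 4) * (SchroedingerAux.dd (fun q : ℂ × ℂ => f₀ ⟨q.1, q.2⟩) ((0 : ℂ), (1 : ℂ)) (w.z1, w.z2)) * (SchroedingerAux.dd (fun q : ℂ × ℂ => φ ⟨q.1, q.2⟩) ((1 : ℂ), (0 : ℂ)) (w.z1, w.z2)) *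 (f₀ w) ^ 0 * (f₀ w)⁻¹ + ((-1 : ℂ) / 4) * (SchroedingerAux.dd (fun q : ℂ × ℂ => f₀ ⟨q.1, q.2⟩) ((0 : ℂ), (1 : ℂ)) (w.z1, w.z2)) * (SchroedingerAux.dd (fun q : ℂ × ℂ => φ ⟨q.1, q.2⟩) (Complex.I, (0 : ℂ)) (w.z1, w.z2)) * Complex.I * (f₀ w) ^ 0 * (f₀ w)⁻¹ + ((-1 : ℂ) / 4) * (SchroedingerAux.dd (fun q : ℂ × ℂ => f₀ ⟨q.1, q.2⟩) ((0 : ℂ), Complex.I) (w.z1, w.z2)) * (SchroedingerAux.dd (fun q : ℂ × ℂ => φ ⟨q.1, q.2⟩) ((1 : ℂ), (0 : ℂ)) (w.z1, w.z2)) * Complex.I * (f₀ w) ^ 0 * (f₀ w)⁻¹ + ((1 : ℂ) / 4) * (SchroedingerAux.dd (fun q : ℂ × ℂ => f₀ ⟨q.1, q.2⟩) ((0 : ℂ), Complex.I) (w.z1, w.z2)) * (SchroedingerAux.dd (fun q : ℂ × ℂ => φ ⟨q.1, q.2⟩) (Complex.I, (0 : ℂ)) (w.z1, w.z2)) * Complex.I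 ^ 2 * (f₀ w) ^ 0 * (f₀ w)⁻¹)) * hinv
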